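/- Let Γ be a signed graph in which every connected component has at least two vertices, with no pendant vertices. Then η(Γ) ≤ 2c(Γ). Moreover, if some two distinct cycles of Γ share a common vertex, then η(Γ) ≤ 2c(Γ) − 1. -/

import Mathlib

open scoped Classical

/-- The nullity of a real matrix: the dimension of the kernel of the
associated linear map. -/
noncomputable def Matrix.nullity {n : Type*} [Fintype n] (A : Matrix n n ℝ) : ℕ :=
  Module.finrank ℝ (LinearMap.ker A.mulVecLin)

/-- The cyclomatic number `c(G) = |E(G)| − |V(G)| + ω(G)` of a finite simple
graph, where `ω(G)` is the number of connected components. -/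
noncomputable def SimpleGraph.cyclomatic {V : Type*} [Fintype V] (G : SimpleGraph V) : ℤ :=
  (Nat.card G.edgeSet : ℤ) - Fintype.card V + Nat.card G.ConnectedComponent

namespace NullityAux

set_option linter.unusedSectionVars false

open SimpleGraph

variable {V : Type*} [Fintype V] [DecidableEq V]

lemma exists_leaf (T : SimpleGraph V) (hT : T.IsAcyclic) {v₀ w₀ : V} (h₀ : T.Adj v₀ w₀) :
    ∃ ℓ p, T.Adj ℓ p ∧ ∀ u, T.Adj ℓ u → u = p := by
  classical
  have : Nonempty V := ⟨v₀⟩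
  set P : ℕ → Prop := fun n => ∃ (a b : V) (q : T.Walk a b), q.IsPath ∧ q.length = n with hP
  have h1 : P 1 := ⟨v₀, w₀, Walk.cons h₀ Walk.nil, by simp [h₀.ne], rfl⟩
  have hcard : 1 ≤ Fintype.card V := Fintype.card_pos
  set n := Nat.findGreatest P (Fintype.card V) with hn
  have hPn : P n := Nat.findGreatest_spec hcard h1
  have hmax : ∀ m, P m → m ≤ n := by
    intro m hm
    by_contra hlt
    push_neg at hlt
    refine Nat.findGreatest_is_greatest hlt ?_ hm
    obtain ⟨a, b, q, hq, rfl⟩ := hm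
    exact le_of_lt hq.length_lt
  have hn1 : 1 ≤ n := Nat.le_findGreatest hcard h1
  obtain ⟨a, b, q, hq, hlen⟩ := hPn
  cases q with
  | nil => simp at hlen; omega
  | cons hac p' =>
    rename_i c
    rw [Walk.cons_isPath_iff] at hq
    obtain ⟨hp', hanotin⟩ := hq
    refine ⟨a, c, hac, ?_⟩
    intro u hu
    by_contra hne
    have husupp : u ∈ p'.support := by
      by_cases hmem : u ∈ (Walk.cons hac p').support
      · rw [Walk.support_cons] at hmem
        rcases List.mem_cons.mp hmem with h | h
        · exact absurd h.symm hu.ne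
        · exact h
      · exfalso
        have hP' : P (n + 1) :=
          ⟨u, b, Walk.cons hu.symm (Walk.cons hac p'),
            by rw [Walk.cons_isPath_iff]; exact ⟨by rw [Walk.cons_isPath_iff]; exact ⟨hp', hanotin⟩, hmem⟩,
            by simp [hlen]⟩
        have := hmax _ hP'
        omega
    have hq' : (p'.takeUntil u husupp).IsPath := hp'.takeUntil husupp
    have hanotin' : a ∉ (p'.takeUntil u husupp).support :=
      fun h => hanotin (Walk.support_takeUntil_subset _ husupp h)
    have hP2 : (Walk.cons hac (p'.takeUntil u husupp)).IsPath := by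
      rw [Walk.cons_isPath_iff]; exact ⟨hq', hanotin'⟩
    have hcyc : (Walk.cons hu.symm (Walk.cons hac (p'.takeUntil u husupp))).IsCycle := by
      rw [Walk.cons_isCycle_iff]
      refine ⟨hP2, ?_⟩
      intro hmem
      rw [Walk.edges_cons] at hmem
      rcases List.mem_cons.mp hmem with h | h
      · rw [Sym2.eq_iff] at h
        rcases h with ⟨h1, h2⟩ | ⟨h1, h2⟩
        · exact hu.ne h1.symm
        · exact hne h1
      · exact hanotin' (Walk.snd_mem_support_of_mem_edges _ h)
    exact hT _ hcyc




lemma forest_ker (n : ℕ) : ∀ (T : SimpleGraph V), T.edgeFinset.card = n → T.IsAcyclic →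
    ∀ (a : V → V → ℝ) (x : V → ℝ),
    (∀ u w, T.Adj u w → a u w ≠ 0) →
    (∀ w, ∑ u, (if T.Adj w u then a w u else 0) * x u = 0) →
    (∀ w, (Finset.univ.filter (fun u => T.Adj w u)).card ≤ 1 → x w = 0) →
    ∀ w, x w = 0 := by
  induction n using Nat.strong_induction_on with
  | _ n IH =>
  intro T hn hT a x ha heq hleaf v
  by_cases hE : ∃ p q, T.Adj p q
  · obtain ⟨p₀, q₀, h₀⟩ := hE
    obtain ⟨ℓ, p, hadj, huniq⟩ := exists_leaf T hT h₀
    have hnb : Finset.univ.filter (fun u => T.Adj ℓ u) = {p} := by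
      ext u
      simp only [Finset.mem_filter, Finset.mem_univ, true_and, Finset.mem_singleton]
      exact ⟨fun h => huniq u h, fun h => h ▸ hadj⟩
    have hxℓ : x ℓ = 0 := hleaf ℓ (by rw [hnb]; simp)
    have hxp : x p = 0 := by
      have hsum := heq ℓ
      have : ∑ u, (if T.Adj ℓ u then a ℓ u else 0) * x u = a ℓ p * x p := by
        rw [Finset.sum_eq_single p]
        · simp [hadj]
        · intro u _ hup
          have : ¬ T.Adj ℓ u := fun h => hup (huniq u h)
          simp [this]
        · intro h; exact absurd (Finset.mem_univ p) h
      rw [this] at hsum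
      exact (mul_eq_zero.mp hsum).resolve_left (ha ℓ p hadj)
    set T' := T.deleteEdges {s(ℓ, p)} with hT'def
    have hT'le : T' ≤ T := deleteEdges_le _
    have hT'a : T'.IsAcyclic := by
      intro u c hc
      exact hT (c.transfer T (fun e he => edgeSet_mono hT'le (c.edges_subset_edgeSet he)))
        (hc.transfer _)
    have hnotadj : ¬ T'.Adj ℓ p := by
      rw [hT'def, deleteEdges_adj]
      simp
    have hcardlt : T'.edgeFinset.card < n := by
      rw [← hn]
      apply Finset.card_lt_card
      constructor
      · exact edgeFinset_subset_edgeFinset.2 hT'le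
      · intro hsub
        have h1 : s(ℓ, p) ∈ T.edgeFinset := by rw [mem_edgeFinset, mem_edgeSet]; exact hadj
        have h2 := hsub h1
        rw [mem_edgeFinset, mem_edgeSet] at h2
        exact hnotadj h2
    refine IH T'.edgeFinset.card hcardlt T' (by convert rfl) hT'a a x (fun u w h => ha u w (hT'le h)) ?_ ?_ v
    · intro w
      by_cases hwℓ : w = ℓ
      · subst hwℓ
        apply Finset.sum_eq_zero
        intro u _
        have : ¬ T'.Adj w u := by
          intro h'
          have h'' : T.Adj w u := hT'le h'
          have := huniq u h''
          subst this
          exact hnotadj h'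
        simp [this]
      · have hsame : ∑ u, (if T'.Adj w u then a w u else 0) * x u
            = ∑ u, (if T.Adj w u then a w u else 0) * x u := by
          apply Finset.sum_congr rfl
          intro u _
          by_cases h1 : T'.Adj w u
          · simp [h1, hT'le h1]
          · by_cases h2 : T.Adj w u
            · have hmem : s(w, u) ∈ ({s(ℓ, p)} : Set (Sym2 V)) := by
                by_contra hmem
                exact h1 (by rw [hT'def, deleteEdges_adj]; exact ⟨h2, hmem⟩)
              rw [Set.mem_singleton_iff, Sym2.eq_iff] at hmem
              rcases hmem with ⟨hw, hu⟩ | ⟨hw, hu⟩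
              · exact absurd hw hwℓ
              · subst hu; simp [hxℓ]
            · simp [h1, h2]
        convert hsame.trans (heq w)
    · intro w hw
      by_cases hwℓ : w = ℓ
      · exact hwℓ ▸ hxℓ
      by_cases hwp : w = p
      · exact hwp ▸ hxp
      · apply hleaf w
        have : Finset.univ.filter (fun u => T.Adj w u) = Finset.univ.filter (fun u => T'.Adj w u) := by
          ext u
          simp only [Finset.mem_filter, Finset.mem_univ, true_and]
          constructor
          · intro h2
            rw [hT'def, deleteEdges_adj]
            refine ⟨h2, ?_⟩
            intro hmem
            rw [Set.mem_singleton_iff, Sym2.eq_iff] at hmem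
            rcases hmem with ⟨hw1, _⟩ | ⟨hw1, _⟩
            · exact hwℓ hw1
            · exact hwp hw1
          · exact fun h => hT'le h
        rw [this]; convert hw
  · push_neg at hE
    apply hleaf v
    have : Finset.univ.filter (fun u => T.Adj v u) = ∅ := by
      ext u; simp [hE v u]
    rw [this]; simp



lemma card_cc_bot : Nat.card (⊥ : SimpleGraph V).ConnectedComponent = Fintype.card V := by
  have hbij : Function.Bijective (fun v => (⊥ : SimpleGraph V).connectedComponentMk v) := by
    constructor
    · intro u w h
      exact reachable_bot.mp (ConnectedComponent.eq.mp h)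
    · intro C
      exact C.exists_rep
  rw [← Nat.card_eq_of_bijective _ hbij, Nat.card_eq_fintype_card]

lemma cc_exists_mk {G : SimpleGraph V} (C : G.ConnectedComponent) :
    ∃ a, G.connectedComponentMk a = C := C.exists_rep

lemma reach_delete_of_reach {G : SimpleGraph V} {u v : V}
    (hr : (G.deleteEdges {s(u, v)}).Reachable u v) {a b : V} (p : G.Walk a b) :
    (G.deleteEdges {s(u, v)}).Reachable a b := by
  induction p with
  | nil => rfl
  | @cons c d e h p ih =>
    refine Reachable.trans ?_ ih
    by_cases hcd : s(c, d) = s(u, v)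
    · rw [Sym2.eq_iff] at hcd
      rcases hcd with ⟨rfl, rfl⟩ | ⟨rfl, rfl⟩
      · exact hr
      · exact hr.symm
    · exact Adj.reachable (by rw [deleteEdges_adj]; exact ⟨h, hcd⟩)

lemma card_cc_deleteEdges_nonbridge {G : SimpleGraph V} {u v : V} (h : G.Adj u v)
    (hr : (G.deleteEdges {s(u, v)}).Reachable u v) :
    Nat.card (G.deleteEdges {s(u, v)}).ConnectedComponent = Nat.card G.ConnectedComponent := by
  set G' := G.deleteEdges {s(u, v)} with hG'
  apply Nat.card_eq_of_bijective
    (ConnectedComponent.map (Hom.ofLE (deleteEdges_le _)))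
  constructor
  · intro C D hCD
    obtain ⟨a, rfl⟩ := cc_exists_mk C
    obtain ⟨b, rfl⟩ := cc_exists_mk D
    simp only [ConnectedComponent.map_mk, Hom.ofLE_apply] at hCD
    obtain ⟨p⟩ := ConnectedComponent.eq.mp hCD
    exact ConnectedComponent.eq.mpr (reach_delete_of_reach hr p)
  · intro C
    obtain ⟨a, rfl⟩ := cc_exists_mk C
    exact ⟨G'.connectedComponentMk a, by rw [ConnectedComponent.map_mk]; rfl⟩

lemma reach_trichotomy {G : SimpleGraph V} (u v : V) {a b : V} (p : G.Walk a b) :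
    (G.deleteEdges {s(u, v)}).Reachable a b ∨
    ((G.deleteEdges {s(u, v)}).Reachable a u ∧ (G.deleteEdges {s(u, v)}).Reachable v b) ∨
    ((G.deleteEdges {s(u, v)}).Reachable a v ∧ (G.deleteEdges {s(u, v)}).Reachable u b) := by
  induction p with
  | nil => exact Or.inl (Reachable.refl _)
  | @cons c d e h p ih =>
    by_cases hcd : s(c, d) = s(u, v)
    · rw [Sym2.eq_iff] at hcd
      rcases hcd with ⟨rfl, rfl⟩ | ⟨rfl, rfl⟩
      · rcases ih with h1 | ⟨h1, h2⟩ | ⟨h1, h2⟩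
        · exact Or.inr (Or.inl ⟨Reachable.refl _, h1⟩)
        · exact Or.inr (Or.inl ⟨Reachable.refl _, h2⟩)
        · exact Or.inl h2
      · rcases ih with h1 | ⟨h1, h2⟩ | ⟨h1, h2⟩
        · exact Or.inr (Or.inr ⟨Reachable.refl _, h1⟩)
        · exact Or.inl h2
        · exact Or.inr (Or.inr ⟨Reachable.refl _, h2⟩)
    · have hstep : (G.deleteEdges {s(u, v)}).Reachable c d :=
        Adj.reachable (by rw [deleteEdges_adj]; exact ⟨h, hcd⟩)
      rcases ih with h1 | ⟨h1, h2⟩ | ⟨h1, h2⟩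
      · exact Or.inl (hstep.trans h1)
      · exact Or.inr (Or.inl ⟨hstep.trans h1, h2⟩)
      · exact Or.inr (Or.inr ⟨hstep.trans h1, h2⟩)

lemma card_cc_deleteEdges_bridge {G : SimpleGraph V} {u v : V} (h : G.Adj u v)
    (hnr : ¬ (G.deleteEdges {s(u, v)}).Reachable u v) :
    Nat.card (G.deleteEdges {s(u, v)}).ConnectedComponent
      = Nat.card G.ConnectedComponent + 1 := by
  set G' := G.deleteEdges {s(u, v)} with hG'
  set φ : G'.ConnectedComponent → G.ConnectedComponent :=
    ConnectedComponent.map (Hom.ofLE (deleteEdges_le _)) with hφ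
  set Ψ : G'.ConnectedComponent → G.ConnectedComponent ⊕ Unit := fun C =>
    if C = G'.connectedComponentMk v then Sum.inr () else Sum.inl (φ C) with hΨ
  have hbij : Function.Bijective Ψ := by
    constructor
    · intro C D hCD
      by_cases hC : C = G'.connectedComponentMk v <;>
        by_cases hD : D = G'.connectedComponentMk v
      · exact hC.trans hD.symm
      · rw [hΨ] at hCD; simp only [if_pos hC, if_neg hD] at hCD; exact absurd hCD.symm (by simp)
      · rw [hΨ] at hCD; simp only [if_neg hC, if_pos hD] at hCD; exact absurd hCD (by simp)
      · rw [hΨ] at hCD; simp only [if_neg hC, if_neg hD, Sum.inl.injEq] at hCD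
        obtain ⟨a, rfl⟩ := cc_exists_mk C
        obtain ⟨b, rfl⟩ := cc_exists_mk D
        simp only [hφ, ConnectedComponent.map_mk, Hom.ofLE_apply] at hCD
        obtain ⟨p⟩ := ConnectedComponent.eq.mp hCD
        rcases reach_trichotomy u v p with h1 | ⟨h1, h2⟩ | ⟨h1, h2⟩
        · exact ConnectedComponent.eq.mpr h1
        · exact absurd (ConnectedComponent.eq.mpr h2.symm) hD
        · exact absurd (ConnectedComponent.eq.mpr h1) hC
    · intro K
      rcases K with K | _
      · obtain ⟨a, rfl⟩ := cc_exists_mk K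
        by_cases ha : G'.connectedComponentMk a = G'.connectedComponentMk v
        · refine ⟨G'.connectedComponentMk u, ?_⟩
          have hu : G'.connectedComponentMk u ≠ G'.connectedComponentMk v :=
            fun hc => hnr (ConnectedComponent.eq.mp hc)
          rw [hΨ]
          simp only [if_neg hu, hφ, ConnectedComponent.map_mk, Hom.ofLE_apply]
          have hav : G.Reachable a v := Reachable.mono (deleteEdges_le _)
            (ConnectedComponent.eq.mp ha)
          exact congrArg Sum.inl (ConnectedComponent.eq.mpr (h.reachable.trans hav.symm))
        · exact ⟨G'.connectedComponentMk a, by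
            rw [hΨ]
            simp only [if_neg ha, hφ, ConnectedComponent.map_mk,
              Hom.ofLE_apply]⟩
      · exact ⟨G'.connectedComponentMk v, by rw [hΨ]; simp⟩
  rw [Nat.card_eq_of_bijective _ hbij, Nat.card_sum]
  simp




lemma isAcyclic_deleteEdges {T : SimpleGraph V} (hT : T.IsAcyclic) (s : Set (Sym2 V)) :
    (T.deleteEdges s).IsAcyclic := by
  intro u c hc
  exact hT (c.transfer T (fun e he => edgeSet_mono (deleteEdges_le s) (c.edges_subset_edgeSet he)))
    (hc.transfer _)

lemma edgeFinset_deleteEdges_card {G : SimpleGraph V} {u v : V} (h : G.Adj u v) :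
    (G.deleteEdges {s(u, v)}).edgeFinset.card = G.edgeFinset.card - 1 := by
  have : (G.deleteEdges {s(u, v)}).edgeFinset = G.edgeFinset.erase s(u, v) := by
    ext e
    simp only [mem_edgeFinset, edgeSet_deleteEdges, Set.mem_diff, Set.mem_singleton_iff,
      Finset.mem_erase]
    tauto
  rw [this, Finset.card_erase_of_mem (by rw [mem_edgeFinset, mem_edgeSet]; exact h)]

lemma acyclic_count (n : ℕ) : ∀ (T : SimpleGraph V), T.edgeFinset.card = n → T.IsAcyclic →
    T.edgeFinset.card + Nat.card T.ConnectedComponent = Fintype.card V := by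
  induction n using Nat.strong_induction_on with
  | _ n IH =>
  intro T hn hT
  rcases Finset.eq_empty_or_nonempty T.edgeFinset with he | ⟨e, he⟩
  · have hbot : T = ⊥ := by
      rw [← edgeSet_eq_empty, ← Set.toFinset_eq_empty]
      rw [show T.edgeSet.toFinset = T.edgeFinset from rfl]
      exact he
    subst hbot
    rw [he, Finset.card_empty, card_cc_bot]
    omega
  · revert he
    refine Sym2.ind (fun u v he => ?_) e
    have hadj : T.Adj u v := (mem_edgeSet _).mp (mem_edgeFinset.mp he)
    have hb : T.IsBridge s(u, v) :=
      (isAcyclic_iff_forall_edge_isBridge.mp hT) (mem_edgeFinset.mp he)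
    have hnr : ¬ (T.deleteEdges {s(u, v)}).Reachable u v := isBridge_iff.mp hb
    have hT' : (T.deleteEdges {s(u, v)}).IsAcyclic := isAcyclic_deleteEdges hT _
    have hcard : (T.deleteEdges {s(u, v)}).edgeFinset.card = n - 1 := by
      rw [edgeFinset_deleteEdges_card hadj, hn]
    have hpos : 1 ≤ n := by
      rw [← hn]
      exact Finset.card_pos.mpr ⟨s(u, v), he⟩
    have hIH := IH (n - 1) (by omega) (T.deleteEdges {s(u, v)}) (by convert hcard) hT'
    simp only [edgeFinset_card, ← Nat.card_eq_fintype_card] at hIH hcard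
    rw [hcard, card_cc_deleteEdges_bridge hadj hnr] at hIH
    rw [Nat.card_eq_fintype_card (α := V)] at hIH
    omega

lemma exists_spanning_forest (n : ℕ) : ∀ (G : SimpleGraph V), G.edgeFinset.card = n →
    ∃ F : SimpleGraph V, F ≤ G ∧ F.IsAcyclic ∧
      F.edgeFinset.card + Nat.card G.ConnectedComponent = Fintype.card V := by
  induction n using Nat.strong_induction_on with
  | _ n IH =>
  intro G hn
  by_cases hT : G.IsAcyclic
  · exact ⟨G, le_refl _, hT, acyclic_count _ G rfl hT⟩
  · rw [IsAcyclic] at hT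
    push_neg at hT
    obtain ⟨v0, c, hc⟩ := hT
    cases c with
    | nil =>
      rw [Walk.isCycle_def] at hc
      exact absurd rfl hc.2.1
    | @cons _ y _ hadj p =>
      have hmem : s(v0, y) ∈ (Walk.cons hadj p).edges := by
        rw [Walk.edges_cons]; exact List.mem_cons_self
      have hnb : ¬ G.IsBridge s(v0, y) := fun hb =>
        ((isBridge_iff_mem_and_forall_cycle_notMem hadj).mp hb) (Walk.cons hadj p) hc hmem
      have hr : (G.deleteEdges {s(v0, y)}).Reachable v0 y := by
        by_contra hnr
        exact hnb (isBridge_iff.mpr hnr)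
      have hpos : 1 ≤ n := by
        rw [← hn]
        exact Finset.card_pos.mpr ⟨s(v0, y), by rw [mem_edgeFinset, mem_edgeSet]; exact hadj⟩
      have hcard : (G.deleteEdges {s(v0, y)}).edgeFinset.card = n - 1 := by
        rw [edgeFinset_deleteEdges_card hadj, hn]
      obtain ⟨F, hF1, hF2, hF3⟩ := IH (n - 1) (by omega) (G.deleteEdges {s(v0, y)}) (by convert hcard)
      refine ⟨F, hF1.trans (deleteEdges_le _), hF2, ?_⟩
      rw [card_cc_deleteEdges_nonbridge hadj hr] at hF3
      exact hF3



lemma exists_edge_of_mem_support {G : SimpleGraph V} {v0 y : V} {c : G.Walk v0 v0}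
    (hc : c.IsCycle) (hy : y ∈ c.support) : ∃ z, s(y, z) ∈ c.edges := by
  have hrot := hc.rotate hy
  cases hW : c.rotate _ hy with
  | nil =>
    rw [hW, Walk.isCycle_def] at hrot
    exact absurd rfl hrot.2.1
  | @cons _ z _ hadj p =>
    refine ⟨z, ?_⟩
    have hmem : s(y, z) ∈ (c.rotate _ hy).edges := by
      rw [hW, Walk.edges_cons]; exact List.mem_cons_self
    exact ((c.rotate_edges _ hy).mem_iff).mp hmem

lemma toSubgraph_eq_of_edges_eq {G : SimpleGraph V} {u₁ u₂ : V}
    {c₁ : G.Walk u₁ u₁} {c₂ : G.Walk u₂ u₂}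
    (h₁ : c₁.IsCycle) (h₂ : c₂.IsCycle) (h : ∀ e, e ∈ c₁.edges ↔ e ∈ c₂.edges) :
    c₁.toSubgraph = c₂.toSubgraph := by
  apply Subgraph.ext
  · rw [Walk.verts_toSubgraph, Walk.verts_toSubgraph]
    ext y
    simp only [Set.mem_setOf_eq]
    constructor
    · intro hy
      obtain ⟨z, hz⟩ := exists_edge_of_mem_support h₁ hy
      exact Walk.fst_mem_support_of_mem_edges c₂ ((h _).mp hz)
    · intro hy
      obtain ⟨z, hz⟩ := exists_edge_of_mem_support h₂ hy
      exact Walk.fst_mem_support_of_mem_edges c₁ ((h _).mpr hz)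
  · funext y z
    apply propext
    rw [← Subgraph.mem_edgeSet, ← Subgraph.mem_edgeSet,
      Walk.mem_edges_toSubgraph, Walk.mem_edges_toSubgraph]
    exact h _

lemma first_new_edge {G : SimpleGraph V} {u₁ : V} (c₁ : G.Walk u₁ u₁) :
    ∀ {a b : V} (p : G.Walk a b), a ∈ c₁.support →
    (∃ e ∈ p.edges, e ∉ c₁.edges) →
    ∃ w w', s(w, w') ∈ p.edges ∧ s(w, w') ∉ c₁.edges ∧ w ∈ c₁.support := by
  intro a b p
  induction p with
  | nil =>
    rintro _ ⟨e, he, _⟩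
    simp at he
  | @cons c d e hadj p ih =>
    intro hasup hex
    by_cases hfirst : s(c, d) ∈ c₁.edges
    · have hdsup : d ∈ c₁.support := Walk.snd_mem_support_of_mem_edges c₁ hfirst
      obtain ⟨f, hf, hfn⟩ := hex
      rw [Walk.edges_cons] at hf
      rcases List.mem_cons.mp hf with rfl | hf'
      · exact absurd hfirst hfn
      · obtain ⟨w, w', h1, h2, h3⟩ := ih hdsup ⟨f, hf', hfn⟩
        exact ⟨w, w', by rw [Walk.edges_cons]; exact List.mem_cons_of_mem _ h1, h2, h3⟩
    · exact ⟨c, d, by rw [Walk.edges_cons]; exact List.mem_cons_self, hfirst, hasup⟩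

lemma part2_config {G : SimpleGraph V} {u₁ u₂ v : V} {c₁ : G.Walk u₁ u₁} {c₂ : G.Walk u₂ u₂}
    (h₁ : c₁.IsCycle) (h₂ : c₂.IsCycle) (hv₁ : v ∈ c₁.support) (hv₂ : v ∈ c₂.support)
    {e₀ : Sym2 V} (he₀₂ : e₀ ∈ c₂.edges) (he₀₁ : e₀ ∉ c₁.edges) :
    ∃ (w b₁ b₂ : V), G.Adj w b₁ ∧ G.Adj w b₂ ∧ s(w, b₁) ≠ s(w, b₂) ∧
      (G.deleteEdges {s(w, b₂)}).Reachable w b₂ ∧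
      ((G.deleteEdges {s(w, b₂)}).deleteEdges {s(w, b₁)}).Reachable w b₁ := by
  have h₂' := h₂.rotate hv₂
  have he₀' : e₀ ∈ (c₂.rotate _ hv₂).edges := ((c₂.rotate_edges _ hv₂).mem_iff).mpr he₀₂
  obtain ⟨w, w', h1, h2, h3⟩ := first_new_edge c₁ (c₂.rotate _ hv₂) hv₁ ⟨e₀, he₀', he₀₁⟩
  have hA2 : G.Adj w w' := (c₂.rotate _ hv₂).adj_of_mem_edges h1
  have hr₂ : (G.deleteEdges {s(w, w')}).Reachable w w' := by
    by_contra hnr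
    exact ((isBridge_iff_mem_and_forall_cycle_notMem hA2).mp
      (isBridge_iff.mpr hnr)) (c₂.rotate _ hv₂) h₂' h1
  have hd := h₁.rotate h3
  cases hW : c₁.rotate _ h3 with
  | nil =>
    rw [hW, Walk.isCycle_def] at hd
    exact absurd rfl hd.2.1
  | @cons _ y _ hadj q =>
    have he₁ : s(w, y) ∈ c₁.edges := by
      refine ((c₁.rotate_edges _ h3).mem_iff).mp ?_
      rw [hW, Walk.edges_cons]
      exact List.mem_cons_self
    have hne : s(w, y) ≠ s(w, w') := fun h => h2 (h ▸ he₁)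
    have hA1 : G.Adj w y := c₁.adj_of_mem_edges he₁
    have hedges : ∀ e ∈ c₁.edges, e ∈ (G.deleteEdges {s(w, w')}).edgeSet := by
      intro e he
      rw [edgeSet_deleteEdges]
      refine ⟨c₁.edges_subset_edgeSet he, ?_⟩
      rw [Set.mem_singleton_iff]
      rintro rfl
      exact h2 he
    have htc := h₁.transfer hedges
    have he₁' : s(w, y) ∈ (c₁.transfer _ hedges).edges := by
      rw [Walk.edges_transfer]; exact he₁
    have hG2adj : (G.deleteEdges {s(w, w')}).Adj w y := by
      rw [deleteEdges_adj]
      exact ⟨hA1, by rw [Set.mem_singleton_iff]; exact hne⟩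
    have hr₁ : ((G.deleteEdges {s(w, w')}).deleteEdges {s(w, y)}).Reachable w y := by
      by_contra hnr
      exact ((isBridge_iff_mem_and_forall_cycle_notMem hG2adj).mp
        (isBridge_iff.mpr hnr)) (c₁.transfer _ hedges) htc he₁'
    exact ⟨w, y, w', hA1, hA2, hne, hr₂, hr₁⟩


lemma sym2_endpoints_card_le (e : Sym2 V) :
    (Finset.univ.filter (fun v => v ∈ e)).card ≤ 2 := by
  refine Sym2.ind (fun a b => ?_) e
  have hsub : (Finset.univ.filter (fun v => v ∈ s(a, b))) ⊆ insert a {b} := by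
    intro v hv
    rw [Finset.mem_filter] at hv
    rcases Sym2.mem_iff.mp hv.2 with rfl | rfl
    · exact Finset.mem_insert_self _ _
    · exact Finset.mem_insert_of_mem (Finset.mem_singleton_self _)
  exact le_trans (Finset.card_le_card hsub) (le_trans (Finset.card_insert_le _ _) (by simp))

lemma nullity_le_S (G : SimpleGraph V) (σ : V → V → ℝ)
    (hσ : ∀ u v, G.Adj u v → σ u v = 1 ∨ σ u v = -1)
    (A : Matrix V V ℝ)
    (hA : ∀ u v, A u v = if G.Adj u v then σ u v else 0)
    (hcomp : ∀ v : V, ∃ u : V, G.Adj v u)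
    (hnopendant : ∀ v : V, Nat.card (G.neighborSet v) ≠ 1)
    (F : SimpleGraph V) (hFle : F ≤ G) (hFa : F.IsAcyclic)
    (S : Finset V)
    (hS : ∀ v u : V, G.Adj v u → ¬ F.Adj v u → v ∈ S ∧ u ∈ S) :
    A.nullity ≤ S.card := by
  have hdeg2 : ∀ v, 2 ≤ (Finset.univ.filter (fun u => G.Adj v u)).card := by
    intro v
    have h1 : (G.neighborSet v).toFinset = Finset.univ.filter (fun u => G.Adj v u) := by
      ext u; simp [mem_neighborSet]
    have h2 : Nat.card (G.neighborSet v) = (Finset.univ.filter (fun u => G.Adj v u)).card := by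
      rw [Nat.card_coe_set_eq, Set.ncard_eq_toFinset_card', h1]
    have h3 := hnopendant v
    rw [h2] at h3
    obtain ⟨u, hu⟩ := hcomp v
    have h4 : 0 < (Finset.univ.filter (fun u => G.Adj v u)).card :=
      Finset.card_pos.mpr ⟨u, by simp [hu]⟩
    omega
  set Φ : (LinearMap.ker A.mulVecLin) →ₗ[ℝ] ({x : V // x ∈ S} → ℝ) :=
    (LinearMap.funLeft ℝ ℝ (fun s : {x : V // x ∈ S} => (s : V))).comp
      (Submodule.subtype _) with hΦ
  have hinj : Function.Injective Φ := by
    rw [← LinearMap.ker_eq_bot, LinearMap.ker_eq_bot']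
    intro x hx
    have hxS : ∀ s : V, s ∈ S → x.1 s = 0 := by
      intro s hs
      exact congrFun hx ⟨s, hs⟩
    have hker : ∀ v, ∑ u, A v u * x.1 u = 0 := by
      intro v
      have h := LinearMap.mem_ker.mp x.2
      rw [Matrix.mulVecLin_apply] at h
      have := congrFun h v
      simpa [Matrix.mulVec, dotProduct] using this
    have hall : ∀ w, x.1 w = 0 := by
      refine forest_ker F.edgeFinset.card F rfl hFa (fun u w => A u w) x.1 ?_ ?_ ?_
      · intro u w h
        have hG : G.Adj u w := hFle h
        show A u w ≠ 0
        rw [hA u w, if_pos hG]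
        rcases hσ u w hG with h' | h' <;> rw [h'] <;> norm_num
      · intro w
        show ∑ u, (if F.Adj w u then A w u else 0) * x.1 u = 0
        have hsum : ∑ u, (if F.Adj w u then A w u else 0) * x.1 u = ∑ u, A w u * x.1 u := by
          apply Finset.sum_congr rfl
          intro u _
          by_cases hFwu : F.Adj w u
          · rw [if_pos hFwu]
          · rw [if_neg hFwu]
            by_cases hGwu : G.Adj w u
            · rw [hxS u (hS w u hGwu hFwu).2]
              ring
            · rw [hA w u, if_neg hGwu]
        rw [hsum]
        exact hker w
      · intro w hw
        have hsub : (Finset.univ.filter (fun u => F.Adj w u)) ⊆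
            (Finset.univ.filter (fun u => G.Adj w u)) := by
          intro u hu
          rw [Finset.mem_filter] at hu ⊢
          exact ⟨hu.1, hFle hu.2⟩
        have hlt : (Finset.univ.filter (fun u => F.Adj w u)).card <
            (Finset.univ.filter (fun u => G.Adj w u)).card := by
          have := hdeg2 w
          omega
        obtain ⟨u, huG, huF⟩ := Finset.exists_of_ssubset (Finset.ssubset_iff_of_subset hsub |>.mpr
          (by
            obtain ⟨u, hu1, hu2⟩ := Finset.exists_of_ssubset (hsub.ssubset_of_ne (fun hEq => by
              rw [hEq] at hlt; exact lt_irrefl _ hlt))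
            exact ⟨u, hu1, hu2⟩))
        rw [Finset.mem_filter] at huG
        have huF' : ¬ F.Adj w u := fun h => huF (Finset.mem_filter.mpr ⟨Finset.mem_univ _, h⟩)
        exact hxS w (hS w u huG.2 huF').1
    apply Subtype.ext
    funext w
    exact hall w
  have hfin : Module.finrank ℝ (LinearMap.ker A.mulVecLin) ≤
      Module.finrank ℝ ({x : V // x ∈ S} → ℝ) :=
    LinearMap.finrank_le_finrank_of_injective hinj
  rw [Module.finrank_pi, Fintype.card_coe] at hfin
  exact hfin

lemma natcard_edgeSet (G : SimpleGraph V) : Nat.card G.edgeSet = G.edgeFinset.card := by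
  rw [Nat.card_coe_set_eq, Set.ncard_eq_toFinset_card']; rfl

end NullityAux

open NullityAux SimpleGraph in
/-- Let `Γ` be a signed graph in which every connected
component has at least two vertices and which has no pendant vertices.  Then
`η(Γ) ≤ 2c(Γ)`; moreover if two distinct cycles of `Γ` share a common vertex
then `η(Γ) ≤ 2c(Γ) − 1`. -/
theorem nullity_le_leaf_free {V : Type*} [Fintype V] [DecidableEq V]
    (G : SimpleGraph V) (σ : V → V → ℝ)
    (hsym : ∀ u v, σ u v = σ v u)
    (hσ : ∀ u v, G.Adj u v → σ u v = 1 ∨ σ u v = -1)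
    (A : Matrix V V ℝ)
    (hA : ∀ u v, A u v = if G.Adj u v then σ u v else 0)
    (hcomp : ∀ v : V, ∃ u : V, G.Adj v u)
    (hnopendant : ∀ v : V, Nat.card (G.neighborSet v) ≠ 1) :
    (A.nullity : ℤ) ≤ 2 * G.cyclomatic ∧
    ((∃ (u₁ u₂ : V) (w₁ : G.Walk u₁ u₁) (w₂ : G.Walk u₂ u₂) (v : V),
        w₁.IsCycle ∧ w₂.IsCycle ∧ w₁.toSubgraph ≠ w₂.toSubgraph ∧
        v ∈ w₁.support ∧ v ∈ w₂.support) →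
      (A.nullity : ℤ) ≤ 2 * G.cyclomatic - 1) := by
  have hcycl : G.cyclomatic = (G.edgeFinset.card : ℤ) - Fintype.card V
      + Nat.card G.ConnectedComponent := by
    rw [SimpleGraph.cyclomatic, natcard_edgeSet]
  constructor
  · obtain ⟨F, hFle, hFa, hFcard⟩ := exists_spanning_forest G.edgeFinset.card G rfl
    set extras := G.edgeFinset \ F.edgeFinset with hext
    set S := extras.biUnion (fun e => Finset.univ.filter (fun v => v ∈ e)) with hSdef
    have hprop : ∀ v u, G.Adj v u → ¬ F.Adj v u → v ∈ S ∧ u ∈ S := by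
      intro v u hG hF
      have hmem : s(v, u) ∈ extras := Finset.mem_sdiff.mpr
        ⟨by rw [mem_edgeFinset, mem_edgeSet]; exact hG,
         fun h => hF ((mem_edgeSet F).mp (mem_edgeFinset.mp h))⟩
      constructor
      · exact Finset.mem_biUnion.mpr ⟨s(v, u), hmem, by simp⟩
      · exact Finset.mem_biUnion.mpr ⟨s(v, u), hmem, by simp⟩
    have hnull := nullity_le_S G σ hσ A hA hcomp hnopendant F hFle hFa S hprop
    have hScard : S.card ≤ 2 * extras.card := by
      calc S.card ≤ ∑ e ∈ extras, (Finset.univ.filter (fun v => v ∈ e)).card :=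
            Finset.card_biUnion_le
        _ ≤ ∑ _e ∈ extras, 2 := Finset.sum_le_sum (fun e _ => sym2_endpoints_card_le e)
        _ = 2 * extras.card := by rw [Finset.sum_const, smul_eq_mul, mul_comm]
    have hFsub : F.edgeFinset ⊆ G.edgeFinset := edgeFinset_subset_edgeFinset.2 hFle
    have hexcard : extras.card = G.edgeFinset.card - F.edgeFinset.card :=
      Finset.card_sdiff_of_subset hFsub
    have hFsubcard : F.edgeFinset.card ≤ G.edgeFinset.card := Finset.card_le_card hFsub
    have hfinal : (A.nullity : ℤ) ≤ 2 * G.cyclomatic := by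
      rw [hcycl]
      have h1 : (A.nullity : ℤ) ≤ S.card := by exact_mod_cast hnull
      have h2 : (S.card : ℤ) ≤ 2 * extras.card := by exact_mod_cast hScard
      have h3 : (extras.card : ℤ) = (G.edgeFinset.card : ℤ) - F.edgeFinset.card := by
        rw [hexcard]; push_cast [hFsubcard]; ring
      have h4 : (F.edgeFinset.card : ℤ) + Nat.card G.ConnectedComponent = Fintype.card V := by
        exact_mod_cast hFcard
      linarith
    exact hfinal
  · rintro ⟨u₁, u₂, w₁, w₂, v, hc₁, hc₂, hnesub, hv₁, hv₂⟩
    have hdiff : (∃ e ∈ w₂.edges, e ∉ w₁.edges) ∨ (∃ e ∈ w₁.edges, e ∉ w₂.edges) := by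
      by_contra hcon
      push_neg at hcon
      exact hnesub (toSubgraph_eq_of_edges_eq hc₁ hc₂
        (fun e => ⟨fun h => hcon.2 e h, fun h => hcon.1 e h⟩))
    obtain ⟨w, b₁, b₂, hA1, hA2, hnee, hr₂, hr₁⟩ :
        ∃ w b₁ b₂, G.Adj w b₁ ∧ G.Adj w b₂ ∧ s(w, b₁) ≠ s(w, b₂) ∧
          (G.deleteEdges {s(w, b₂)}).Reachable w b₂ ∧
          ((G.deleteEdges {s(w, b₂)}).deleteEdges {s(w, b₁)}).Reachable w b₁ := by
      rcases hdiff with ⟨e₀, h1, h2⟩ | ⟨e₀, h1, h2⟩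
      · exact part2_config hc₁ hc₂ hv₁ hv₂ h1 h2
      · exact part2_config hc₂ hc₁ hv₂ hv₁ h1 h2
    set G2 := G.deleteEdges {s(w, b₂)} with hG2
    set G3 := G2.deleteEdges {s(w, b₁)} with hG3
    have hG2adj : G2.Adj w b₁ := by
      rw [hG2, deleteEdges_adj]
      exact ⟨hA1, by rw [Set.mem_singleton_iff]; exact hnee⟩
    have hω2 : Nat.card G2.ConnectedComponent = Nat.card G.ConnectedComponent :=
      card_cc_deleteEdges_nonbridge hA2 hr₂
    have hω3 : Nat.card G3.ConnectedComponent = Nat.card G2.ConnectedComponent :=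
      card_cc_deleteEdges_nonbridge hG2adj hr₁
    have hm2 : G2.edgeFinset.card = G.edgeFinset.card - 1 := edgeFinset_deleteEdges_card hA2
    have hm3 : G3.edgeFinset.card = G2.edgeFinset.card - 1 := by
        convert edgeFinset_deleteEdges_card hG2adj
    have hm2pos : 1 ≤ G.edgeFinset.card :=
      Finset.card_pos.mpr ⟨s(w, b₂), by rw [mem_edgeFinset, mem_edgeSet]; exact hA2⟩
    have hm3pos : 1 ≤ G2.edgeFinset.card :=
      Finset.card_pos.mpr ⟨s(w, b₁), by rw [mem_edgeFinset, mem_edgeSet]; exact hG2adj⟩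
    obtain ⟨F, hFle, hFa, hFcard⟩ := exists_spanning_forest G3.edgeFinset.card G3 (by convert rfl)
    have hFleG : F ≤ G := hFle.trans ((deleteEdges_le _).trans (deleteEdges_le _))
    set extras := G.edgeFinset \ F.edgeFinset with hext
    have hnG3b₁ : ¬ G3.Adj w b₁ := by
      rw [hG3, deleteEdges_adj]
      rintro ⟨-, h⟩
      exact h rfl
    have hnG3b₂ : ¬ G3.Adj w b₂ := by
      rw [hG3, deleteEdges_adj, hG2, deleteEdges_adj]
      rintro ⟨⟨-, h⟩, -⟩
      exact h rfl
    have he1 : s(w, b₁) ∈ extras := Finset.mem_sdiff.mpr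
      ⟨by rw [mem_edgeFinset, mem_edgeSet]; exact hA1,
       fun h => hnG3b₁ (hFle ((mem_edgeSet F).mp (mem_edgeFinset.mp h)))⟩
    have he2 : s(w, b₂) ∈ extras := Finset.mem_sdiff.mpr
      ⟨by rw [mem_edgeFinset, mem_edgeSet]; exact hA2,
       fun h => hnG3b₂ (hFle ((mem_edgeSet F).mp (mem_edgeFinset.mp h)))⟩
    set S := extras.biUnion (fun e => Finset.univ.filter (fun v => v ∈ e)) with hSdef
    have hprop : ∀ x u, G.Adj x u → ¬ F.Adj x u → x ∈ S ∧ u ∈ S := by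
      intro x u hG hF
      have hmem : s(x, u) ∈ extras := Finset.mem_sdiff.mpr
        ⟨by rw [mem_edgeFinset, mem_edgeSet]; exact hG,
         fun h => hF ((mem_edgeSet F).mp (mem_edgeFinset.mp h))⟩
      constructor
      · exact Finset.mem_biUnion.mpr ⟨s(x, u), hmem, by simp⟩
      · exact Finset.mem_biUnion.mpr ⟨s(x, u), hmem, by simp⟩
    have hnull := nullity_le_S G σ hσ A hA hcomp hnopendant F hFleG hFa S hprop
    -- refined cardinality bound
    have hpairsub : ({s(w, b₁), s(w, b₂)} : Finset (Sym2 V)) ⊆ extras := by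
      intro e he
      rcases Finset.mem_insert.mp he with rfl | he'
      · exact he1
      · rw [Finset.mem_singleton] at he'
        subst he'
        exact he2
    have hpaircard : ({s(w, b₁), s(w, b₂)} : Finset (Sym2 V)).card = 2 := by
      rw [Finset.card_insert_of_notMem (by rw [Finset.mem_singleton]; exact hnee)]
      simp
    have hexge : 2 ≤ extras.card := by
      have := Finset.card_le_card hpairsub
      omega
    have hSsub : S ⊆ ({w, b₁, b₂} : Finset V) ∪
        (extras \ {s(w, b₁), s(w, b₂)}).biUnion (fun e => Finset.univ.filter (fun v => v ∈ e)) := by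
      intro x hx
      obtain ⟨e, hemem, hxe⟩ := Finset.mem_biUnion.mp hx
      rw [Finset.mem_filter] at hxe
      by_cases h1 : e = s(w, b₁)
      · subst h1
        rcases Sym2.mem_iff.mp hxe.2 with rfl | rfl
        · exact Finset.mem_union_left _ (by simp)
        · exact Finset.mem_union_left _ (by simp)
      by_cases h2 : e = s(w, b₂)
      · subst h2
        rcases Sym2.mem_iff.mp hxe.2 with rfl | rfl
        · exact Finset.mem_union_left _ (by simp)
        · exact Finset.mem_union_left _ (by simp)
      · refine Finset.mem_union_right _ (Finset.mem_biUnion.mpr ⟨e, ?_, Finset.mem_filter.mpr hxe⟩)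
        rw [Finset.mem_sdiff]
        refine ⟨hemem, ?_⟩
        intro hc
        rcases Finset.mem_insert.mp hc with hc' | hc'
        · exact h1 hc'
        · exact h2 (Finset.mem_singleton.mp hc')
    have hScard : S.card + 1 ≤ 2 * extras.card := by
      have hb1 : ({w, b₁, b₂} : Finset V).card ≤ 3 := by
        refine le_trans (Finset.card_insert_le _ _) ?_
        have := Finset.card_insert_le b₁ ({b₂} : Finset V)
        simp only [Finset.card_singleton] at this
        omega
      have hb2 : ((extras \ {s(w, b₁), s(w, b₂)}).biUnion
          (fun e => Finset.univ.filter (fun v => v ∈ e))).card ≤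
          2 * (extras \ {s(w, b₁), s(w, b₂)}).card := by
        calc _ ≤ ∑ e ∈ extras \ {s(w, b₁), s(w, b₂)},
              (Finset.univ.filter (fun v => v ∈ e)).card := Finset.card_biUnion_le
          _ ≤ ∑ _e ∈ extras \ {s(w, b₁), s(w, b₂)}, 2 :=
              Finset.sum_le_sum (fun e _ => sym2_endpoints_card_le e)
          _ = 2 * (extras \ {s(w, b₁), s(w, b₂)}).card := by
              rw [Finset.sum_const, smul_eq_mul, mul_comm]
      have hb3 : (extras \ {s(w, b₁), s(w, b₂)}).card = extras.card - 2 := by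
        rw [Finset.card_sdiff_of_subset hpairsub, hpaircard]
      have hb4 := Finset.card_le_card hSsub
      have hb5 := Finset.card_union_le ({w, b₁, b₂} : Finset V)
        ((extras \ {s(w, b₁), s(w, b₂)}).biUnion (fun e => Finset.univ.filter (fun v => v ∈ e)))
      omega
    -- arithmetic
    have hFsub3 : F.edgeFinset ⊆ G3.edgeFinset := edgeFinset_subset_edgeFinset.2 hFle
    have hFsubcard : F.edgeFinset.card ≤ G3.edgeFinset.card := Finset.card_le_card hFsub3
    have hFsubG : F.edgeFinset ⊆ G.edgeFinset := edgeFinset_subset_edgeFinset.2 hFleG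
    have hexcard : extras.card = G.edgeFinset.card - F.edgeFinset.card :=
      Finset.card_sdiff_of_subset hFsubG
    have hFcardG : F.edgeFinset.card ≤ G.edgeFinset.card := Finset.card_le_card hFsubG
    rw [hcycl]
    have h1 : (A.nullity : ℤ) ≤ S.card := by exact_mod_cast hnull
    have h2 : (S.card : ℤ) + 1 ≤ 2 * extras.card := by exact_mod_cast hScard
    have h3 : (extras.card : ℤ) = (G.edgeFinset.card : ℤ) - F.edgeFinset.card := by
      rw [hexcard]; push_cast [hFcardG]; ring
    have h4 : (F.edgeFinset.card : ℤ) + Nat.card G3.ConnectedComponent = Fintype.card V := by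
      exact_mod_cast hFcard
    have h5 : (G3.edgeFinset.card : ℤ) = (G.edgeFinset.card : ℤ) - 2 := by
      rw [hm3, hm2]
      push_cast [hm2 ▸ hm3pos, hm2pos]
      omega
    have h6 : (Nat.card G3.ConnectedComponent : ℤ) = Nat.card G.ConnectedComponent := by
      rw [hω3, hω2]
    linarith
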